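/- arXiv:2311.06605 — 2 statements merged into one kernel-verified Lean document; each statement's English description precedes it below -/
import Mathlib

section
/- Let S be an (l−k)-dimensional linear subspace of ℝ^l, let M ⊂ S be a measurable set, let D be a nonsingular l×l real matrix, and let B be a k×l real matrix whose rows form a basis of the orthogonal complement (DS)^⊥ of the subspace DS = {Dx : x ∈ S}. Then the (l−k)-dimensional volume satisfies vol_{l−k}(DM) = |det(D)| · sqrt( det(B Bᵀ) / det(B D Dᵀ Bᵀ) ) · vol_{l−k}(M), where DM = {Dx : x ∈ M}. -/
open Matrix MeasureTheory
open scoped ENNReal NNReal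

noncomputable section

-- Hausdorff measure of top dimension on Euclidean space is an additive Haar measure.
theorem euclid_haar (n : ℕ) :
    (μH[(n : ℝ)] : Measure (EuclideanSpace ℝ (Fin n))).IsAddHaarMeasure := by
  set C : ℝ≥0 := (Fintype.card (Fin n) : ℝ≥0) ^ ((1:ℝ≥0∞) / 2).toReal with hC
  have hlip : LipschitzWith 1 (WithLp.equiv 2 (Fin n → ℝ)) := PiLp.lipschitzWith_ofLp 2 _
  have halip : AntilipschitzWith C (WithLp.equiv 2 (Fin n → ℝ)) := PiLp.antilipschitzWith_ofLp 2 _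
  have hlip' : LipschitzWith C ((WithLp.equiv 2 (Fin n → ℝ)).symm) := by
    intro x y
    simpa using halip ((WithLp.equiv 2 (Fin n → ℝ)).symm x) ((WithLp.equiv 2 (Fin n → ℝ)).symm y)
  have hpi : (μH[(n : ℝ)] : Measure (Fin n → ℝ)) = volume := by
    simpa using (hausdorffMeasure_pi_real (ι := Fin n))
  have hd : (0:ℝ) ≤ (n:ℝ) := by positivity
  haveI h1 : IsFiniteMeasureOnCompacts (μH[(n : ℝ)] : Measure (EuclideanSpace ℝ (Fin n))) := by
    constructor
    intro K hK
    have hKim : IsCompact ((WithLp.equiv 2 (Fin n → ℝ)) '' K) :=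
      hK.image (LipschitzWith.continuous hlip)
    have h2 : K = (WithLp.equiv 2 (Fin n → ℝ)).symm '' ((WithLp.equiv 2 (Fin n → ℝ)) '' K) := by
      simp [Set.image_image]
    calc μH[(n : ℝ)] K
        = μH[(n : ℝ)] ((WithLp.equiv 2 (Fin n → ℝ)).symm '' ((WithLp.equiv 2 (Fin n → ℝ)) '' K)) := by
          rw [← h2]
      _ ≤ (C : ℝ≥0∞) ^ (n:ℝ) * μH[(n : ℝ)] ((WithLp.equiv 2 (Fin n → ℝ)) '' K) :=
          hlip'.hausdorffMeasure_image_le hd _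
      _ < ⊤ := by
          rw [hpi]
          exact ENNReal.mul_lt_top (ENNReal.rpow_lt_top_of_nonneg hd ENNReal.coe_ne_top)
            hKim.measure_lt_top
  haveI h2 : Measure.IsOpenPosMeasure (μH[(n : ℝ)] : Measure (EuclideanSpace ℝ (Fin n))) := by
    constructor
    intro U hU hne
    have hUim : IsOpen ((WithLp.equiv 2 (Fin n → ℝ)) '' U) := by
      rw [Equiv.image_eq_preimage_symm]
      exact hU.preimage hlip'.continuous
    have hpos : 0 < volume ((WithLp.equiv 2 (Fin n → ℝ)) '' U) :=
      hUim.measure_pos _ (hne.image _)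
    have hle : μH[(n : ℝ)] ((WithLp.equiv 2 (Fin n → ℝ)) '' U) ≤ (1:ℝ≥0∞) ^ (n:ℝ) * μH[(n : ℝ)] U :=
      hlip.hausdorffMeasure_image_le hd _
    rw [hpi] at hle
    simp only [ENNReal.one_rpow, one_mul] at hle
    exact fun h0 => (hpos.trans_le hle).ne' (by rw [h0])
  exact ⟨⟩

theorem key_det {l d k : ℕ} (hdk : d + k = l)
    (D : Matrix (Fin l) (Fin l) ℝ) (P Q : Matrix (Fin l) (Fin d) ℝ)
    (A : Matrix (Fin d) (Fin d) ℝ) (B : Matrix (Fin k) (Fin l) ℝ)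
    (hPtP : Pᵀ * P = 1) (hQtQ : Qᵀ * Q = 1) (hBQ : B * Q = 0)
    (hDP : D * P = Q * A) (hBDP : B * (D * P) = 0)
    (hden : (B * D * Dᵀ * Bᵀ).det ≠ 0) :
    |A.det| = |D.det| * Real.sqrt ((B * Bᵀ).det / (B * D * Dᵀ * Bᵀ).det) := by
  have hQB : Qᵀ * Bᵀ = 0 := by rw [← transpose_mul, hBQ, transpose_zero]
  have hBDP' : B * D * P = 0 := by rw [Matrix.mul_assoc, hBDP]
  have hPDB : Pᵀ * (Dᵀ * Bᵀ) = 0 := by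
    rw [← Matrix.mul_assoc, ← transpose_mul, ← transpose_mul, hBDP, transpose_zero]
  have hlr : B * D * (Dᵀ * Bᵀ) = B * D * Dᵀ * Bᵀ := by rw [← Matrix.mul_assoc]
  set ε : (Fin d ⊕ Fin k) ≃ Fin l := finSumFinEquiv.trans (finCongr hdk) with hε
  set Hs : Matrix (Fin l) (Fin d ⊕ Fin k) ℝ := fromCols Q Bᵀ with hHs
  set Gs : Matrix (Fin l) (Fin d ⊕ Fin k) ℝ := fromCols P (Dᵀ * Bᵀ) with hGs
  have hH : Hsᵀ * Hs = fromBlocks 1 0 0 (B * Bᵀ) := by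
    rw [hHs, transpose_fromCols, fromRows_mul_fromCols, hQtQ, transpose_transpose,
      hQB, hBQ]
  have hG2 : Gsᵀ * Gs = fromBlocks 1 0 0 (B * D * Dᵀ * Bᵀ) := by
    rw [hGs, transpose_fromCols, fromRows_mul_fromCols, hPtP, transpose_mul,
      transpose_transpose, transpose_transpose, hPDB, hBDP', hlr]
  have hmid : Hsᵀ * D * Gs
      = fromBlocks A (Qᵀ * D * (Dᵀ * Bᵀ)) 0 (B * D * Dᵀ * Bᵀ) := by
    rw [hHs, hGs, transpose_fromCols, transpose_transpose, fromRows_mul,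
      fromRows_mul_fromCols, hBDP', hlr]
    rw [Matrix.mul_assoc, hDP, ← Matrix.mul_assoc, hQtQ, Matrix.one_mul]
  have hsub : ∀ X : Matrix (Fin l) (Fin d ⊕ Fin k) ℝ,
      (X.submatrix ε id).det ^ 2 = (Xᵀ * X).det := by
    intro X
    have h1 : (X.submatrix ε id)ᵀ = Xᵀ.submatrix id ε := Matrix.transpose_submatrix _ _ _
    have h2 : Xᵀ.submatrix id ε * X.submatrix ε id = Xᵀ * X := by
      rw [Matrix.submatrix_mul_equiv, Matrix.submatrix_id_id]
    calc (X.submatrix ε id).det ^ 2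
        = ((X.submatrix ε id)ᵀ).det * (X.submatrix ε id).det := by
          rw [Matrix.det_transpose, sq]
      _ = (Xᵀ.submatrix id ε * X.submatrix ε id).det := by rw [h1, Matrix.det_mul]
      _ = (Xᵀ * X).det := by rw [h2]
  have hHdet : (Hs.submatrix ε id).det ^ 2 = (B * Bᵀ).det := by
    rw [hsub, hH, Matrix.det_fromBlocks_zero₂₁, Matrix.det_one, one_mul]
  have hGdet : (Gs.submatrix ε id).det ^ 2 = (B * D * Dᵀ * Bᵀ).det := by
    rw [hsub, hG2, Matrix.det_fromBlocks_zero₂₁, Matrix.det_one, one_mul]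
  have h3 : (Hs.submatrix ε id).det * D.det * (Gs.submatrix ε id).det
      = A.det * (B * D * Dᵀ * Bᵀ).det := by
    have e1 : (Hs.submatrix ε id).det = (Hsᵀ.submatrix id ε).det := by
      rw [← Matrix.det_transpose (Hs.submatrix ε id), Matrix.transpose_submatrix]
    have e2 : D.det = (D.submatrix ε ε).det := (Matrix.det_submatrix_equiv_self ε D).symm
    have e3 : Hsᵀ.submatrix id ε * D.submatrix ε ε * Gs.submatrix ε id
        = Hsᵀ * D * Gs := by
      rw [Matrix.submatrix_mul_equiv, Matrix.submatrix_mul_equiv, Matrix.submatrix_id_id]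
    calc (Hs.submatrix ε id).det * D.det * (Gs.submatrix ε id).det
        = (Hsᵀ.submatrix id ε * D.submatrix ε ε * Gs.submatrix ε id).det := by
          rw [Matrix.det_mul, Matrix.det_mul, e1, e2]
      _ = (Hsᵀ * D * Gs).det := by rw [e3]
      _ = A.det * (B * D * Dᵀ * Bᵀ).det := by
          rw [hmid, Matrix.det_fromBlocks_zero₂₁]
  set num := (B * Bᵀ).det
  set den := (B * D * Dᵀ * Bᵀ).det
  have h4 : num * D.det ^ 2 * den = A.det ^ 2 * den ^ 2 := by
    have h := congrArg (fun x => x ^ 2) h3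
    simp only [mul_pow] at h
    rwa [hHdet, hGdet] at h
  have h4' : num * D.det ^ 2 = A.det ^ 2 * den :=
    mul_right_cancel₀ hden (by linear_combination h4)
  have h5 : A.det ^ 2 = D.det ^ 2 * (num / den) := by
    field_simp
    linarith [h4']
  calc |A.det| = Real.sqrt (A.det ^ 2) := (Real.sqrt_sq_eq_abs _).symm
    _ = Real.sqrt (D.det ^ 2) * Real.sqrt (num / den) := by
        rw [h5, Real.sqrt_mul (sq_nonneg _)]
    _ = |D.det| * Real.sqrt (num / den) := by rw [Real.sqrt_sq_eq_abs]

-- columns of the matrix of a linear isometry between Euclidean spaces are orthonormal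
theorem toMatrix_isometry_orthonormal {n l : ℕ}
    (L : EuclideanSpace ℝ (Fin n) →ₗᵢ[ℝ] EuclideanSpace ℝ (Fin l)) :
    (LinearMap.toMatrix (EuclideanSpace.basisFun (Fin n) ℝ).toBasis
        (EuclideanSpace.basisFun (Fin l) ℝ).toBasis L.toLinearMap)ᵀ
      * (LinearMap.toMatrix (EuclideanSpace.basisFun (Fin n) ℝ).toBasis
        (EuclideanSpace.basisFun (Fin l) ℝ).toBasis L.toLinearMap) = 1 := by
  set bn := (EuclideanSpace.basisFun (Fin n) ℝ).toBasis
  set bl := (EuclideanSpace.basisFun (Fin l) ℝ).toBasis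
  set P := LinearMap.toMatrix bn bl L.toLinearMap with hP
  have hPentry : ∀ (m : Fin l) (i : Fin n), P m i = (L (bn i)) m := by
    intro m i
    rw [hP, LinearMap.toMatrix_apply]
    rfl
  have hbn : Orthonormal ℝ (⇑bn) := by
    rw [show (⇑bn : Fin n → EuclideanSpace ℝ (Fin n)) = ⇑(EuclideanSpace.basisFun (Fin n) ℝ)
      from (EuclideanSpace.basisFun (Fin n) ℝ).coe_toBasis]
    exact (EuclideanSpace.basisFun (Fin n) ℝ).orthonormal
  ext i j
  calc (Pᵀ * P) i j
      = ∑ m, (L (bn i)) m * (L (bn j)) m := by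
        rw [Matrix.mul_apply]
        simp only [Matrix.transpose_apply]
        exact Finset.sum_congr rfl fun m _ => by rw [hPentry, hPentry]
    _ = @inner ℝ _ _ (L (bn i)) (L (bn j)) := by
        rw [PiLp.inner_apply]; simp [mul_comm]
    _ = @inner ℝ _ _ (bn i) (bn j) := L.inner_map_map _ _
    _ = if i = j then 1 else 0 := orthonormal_iff_ite.mp hbn i j
    _ = (1 : Matrix (Fin n) (Fin n) ℝ) i j := (Matrix.one_apply).symm

set_option maxHeartbeats 2000000

/-- **Lemma 1.** Let `S` be an `(l-k)`-dimensional subspace of `ℝ^l`, `M ⊆ S` measurable,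
`D` a nonsingular `l × l` matrix, and let the rows of `B` form a basis of `(DS)ᗮ`. Then
`vol_{l-k}(DM) = |det D| · sqrt(det(BBᵀ)/det(BDDᵀBᵀ)) · vol_{l-k}(M)`. -/
theorem volume_image_section
    {l k : ℕ} (hkl : k ≤ l)
    (S : Submodule ℝ (EuclideanSpace ℝ (Fin l)))
    (hS : Module.finrank ℝ S = l - k)
    (M : Set (EuclideanSpace ℝ (Fin l))) (hMS : M ⊆ (S : Set (EuclideanSpace ℝ (Fin l))))
    (hM : MeasurableSet M)
    (D : Matrix (Fin l) (Fin l) ℝ) (hD : D.det ≠ 0)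
    (B : Matrix (Fin k) (Fin l) ℝ)
    (hBli : LinearIndependent ℝ (fun i : Fin k => (WithLp.toLp 2 (B i) : EuclideanSpace ℝ (Fin l))))
    (hBspan : Submodule.span ℝ (Set.range fun i : Fin k => (WithLp.toLp 2 (B i) : EuclideanSpace ℝ (Fin l)))
      = (S.map (Matrix.toEuclideanLin D))ᗮ) :
    μH[((l - k : ℕ) : ℝ)] ((Matrix.toEuclideanLin D) '' M)
      = ENNReal.ofReal (|D.det| * Real.sqrt ((B * Bᵀ).det / (B * D * Dᵀ * Bᵀ).det)) *
        μH[((l - k : ℕ) : ℝ)] M := by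
  classical
  set d := l - k with hd
  have hdk : d + k = l := Nat.sub_add_cancel hkl
  set Dlin := Matrix.toEuclideanLin D with hDlin
  set bl := (EuclideanSpace.basisFun (Fin l) ℝ).toBasis with hbl
  set bd := (EuclideanSpace.basisFun (Fin d) ℝ).toBasis with hbd
  have hDmat : LinearMap.toMatrix bl bl Dlin = D := by
    rw [hDlin, Matrix.toEuclideanLin_eq_toLin_orthonormal, LinearMap.toMatrix_toLin]
  -- D as a linear equivalence
  have hDunit : IsUnit (LinearMap.toMatrix bl bl Dlin).det := by
    rw [hDmat]; exact hD.isUnit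
  set De : EuclideanSpace ℝ (Fin l) ≃ₗ[ℝ] EuclideanSpace ℝ (Fin l) :=
    LinearEquiv.ofIsUnitDet hDunit with hDe
  have hDe_coe : (De : EuclideanSpace ℝ (Fin l) →ₗ[ℝ] EuclideanSpace ℝ (Fin l)) = Dlin :=
    LinearEquiv.coe_ofIsUnitDet hDunit
  set DS := S.map Dlin with hDS
  have hDSrank : Module.finrank ℝ DS = d := by
    rw [hDS, ← hDe_coe, LinearEquiv.finrank_map_eq De S, hS]
  -- orthonormal bases
  set bS : OrthonormalBasis (Fin d) ℝ S :=
    (stdOrthonormalBasis ℝ S).reindex (finCongr (by rw [hS])) with hbS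
  set bT : OrthonormalBasis (Fin d) ℝ DS :=
    (stdOrthonormalBasis ℝ DS).reindex (finCongr (by rw [hDSrank])) with hbT
  set φ : EuclideanSpace ℝ (Fin d) ≃ₗᵢ[ℝ] S := bS.repr.symm with hφ
  set ψ : EuclideanSpace ℝ (Fin d) ≃ₗᵢ[ℝ] DS := bT.repr.symm with hψ
  set Lφ : EuclideanSpace ℝ (Fin d) →ₗᵢ[ℝ] EuclideanSpace ℝ (Fin l) :=
    S.subtypeₗᵢ.comp φ.toLinearIsometry with hLφ
  set Lψ : EuclideanSpace ℝ (Fin d) →ₗᵢ[ℝ] EuclideanSpace ℝ (Fin l) :=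
    DS.subtypeₗᵢ.comp ψ.toLinearIsometry with hLψ
  have hLφ_apply : ∀ x, Lφ x = ((φ x : S) : EuclideanSpace ℝ (Fin l)) := fun x => rfl
  have hLψ_apply : ∀ x, Lψ x = ((ψ x : DS) : EuclideanSpace ℝ (Fin l)) := fun x => rfl
  have hLφ_mem : ∀ x, Lφ x ∈ S := fun x => (φ x).2
  -- the induced map A on the parameter space
  have hg_mem : ∀ x, Dlin (Lφ x) ∈ DS := fun x =>
    Submodule.mem_map_of_mem (hLφ_mem x)
  set g : EuclideanSpace ℝ (Fin d) →ₗ[ℝ] DS :=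
    (Dlin ∘ₗ Lφ.toLinearMap).codRestrict DS hg_mem with hg
  set Alin : EuclideanSpace ℝ (Fin d) →ₗ[ℝ] EuclideanSpace ℝ (Fin d) :=
    (ψ.symm.toLinearIsometry.toLinearMap) ∘ₗ g with hAlin
  have hcomm : ∀ x, Lψ (Alin x) = Dlin (Lφ x) := by
    intro x
    have : Alin x = ψ.symm ⟨Dlin (Lφ x), hg_mem x⟩ := rfl
    rw [this, hLψ_apply]
    simp
  -- ranges
  have hrange : Set.range Lφ = (S : Set (EuclideanSpace ℝ (Fin l))) := by
    ext y
    constructor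
    · rintro ⟨x, rfl⟩; exact hLφ_mem x
    · intro hy
      exact ⟨φ.symm ⟨y, hy⟩, by rw [hLφ_apply]; simp⟩
  set M' := Lφ ⁻¹' M with hM'
  have hM'im : Lφ '' M' = M := by
    rw [hM']
    exact Set.image_preimage_eq_of_subset (by rw [hrange]; exact hMS)
  have hDim : Dlin '' M = Lψ '' (Alin '' M') := by
    rw [← hM'im, ← Set.image_comp, ← Set.image_comp]
    exact Set.image_congr fun x _ => (hcomm x).symm
  -- measure computations
  have hd0 : (0:ℝ) ≤ ((d : ℕ) : ℝ) := by positivity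
  haveI := euclid_haar d
  have hμ1 : μH[((d : ℕ) : ℝ)] (Lψ '' (Alin '' M'))
      = μH[((d : ℕ) : ℝ)] (Alin '' M') :=
    Lψ.isometry.hausdorffMeasure_image (Or.inl hd0) _
  have hμ2 : μH[((d : ℕ) : ℝ)] (Alin '' M')
      = ENNReal.ofReal |LinearMap.det Alin| * μH[((d : ℕ) : ℝ)] M' :=
    Measure.addHaar_image_linearMap _ Alin M'
  have hμ3 : μH[((d : ℕ) : ℝ)] M = μH[((d : ℕ) : ℝ)] M' := by
    rw [← hM'im]
    exact (Lφ.isometry.hausdorffMeasure_image (Or.inl hd0) _)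
  -- matrices
  set P := LinearMap.toMatrix bd bl Lφ.toLinearMap with hPdef
  set Q := LinearMap.toMatrix bd bl Lψ.toLinearMap with hQdef
  set Amat := LinearMap.toMatrix bd bd Alin with hAmatdef
  have hPtP : Pᵀ * P = 1 := toMatrix_isometry_orthonormal Lφ
  have hQtQ : Qᵀ * Q = 1 := toMatrix_isometry_orthonormal Lψ
  have hQentry : ∀ (m : Fin l) (j : Fin d), Q m j = (Lψ (bd j)) m := by
    intro m j
    rw [hQdef, LinearMap.toMatrix_apply]
    rfl
  have hPentry : ∀ (m : Fin l) (j : Fin d), P m j = (Lφ (bd j)) m := by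
    intro m j
    rw [hPdef, LinearMap.toMatrix_apply]
    rfl
  have hBmem : ∀ r : Fin k, (WithLp.toLp 2 (B r) : EuclideanSpace ℝ (Fin l)) ∈ DSᗮ := by
    intro r
    rw [← hBspan]
    exact Submodule.subset_span (Set.mem_range_self r)
  have hBQ : B * Q = 0 := by
    ext r j
    rw [Matrix.mul_apply, Matrix.zero_apply]
    have h1 : ∑ m, B r m * Q m j
        = @inner ℝ (EuclideanSpace ℝ (Fin l)) _ (WithLp.toLp 2 (B r) : EuclideanSpace ℝ (Fin l)) (Lψ (bd j)) := by
      rw [PiLp.inner_apply]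
      exact Finset.sum_congr rfl fun m _ => by rw [hQentry]; simp [mul_comm]
    rw [h1]
    have hmem : Lψ (bd j) ∈ DS := by rw [hLψ_apply]; exact (ψ (bd j)).2
    rw [real_inner_comm]
    exact (Submodule.mem_orthogonal DS _).mp (hBmem r) _ hmem
  have hcompmat : D * P = Q * Amat := by
    have hcomp : Dlin ∘ₗ Lφ.toLinearMap = Lψ.toLinearMap ∘ₗ Alin :=
      LinearMap.ext fun x => (hcomm x).symm
    calc D * P = LinearMap.toMatrix bd bl (Dlin ∘ₗ Lφ.toLinearMap) := by
          rw [LinearMap.toMatrix_comp bd bl bl, hDmat]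
      _ = LinearMap.toMatrix bd bl (Lψ.toLinearMap ∘ₗ Alin) := by rw [hcomp]
      _ = Q * Amat := by rw [LinearMap.toMatrix_comp bd bd bl]
  have hBDP : B * (D * P) = 0 := by
    rw [hcompmat, ← Matrix.mul_assoc, hBQ, Matrix.zero_mul]
  -- nonvanishing of the denominator
  have hden : (B * D * Dᵀ * Bᵀ).det ≠ 0 := by
    intro h0
    obtain ⟨v, hv0, hv⟩ := (Matrix.exists_mulVec_eq_zero_iff).mpr h0
    have hker : (Dᵀ * Bᵀ) *ᵥ v = 0 := by
      have h1 : ((Dᵀ * Bᵀ)ᵀ * (Dᵀ * Bᵀ)) *ᵥ v = 0 := by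
        have : (Dᵀ * Bᵀ)ᵀ * (Dᵀ * Bᵀ) = B * D * Dᵀ * Bᵀ := by
          rw [Matrix.transpose_mul, Matrix.transpose_transpose, Matrix.transpose_transpose,
            Matrix.mul_assoc (B * D), ← Matrix.mul_assoc]
        rw [this]; exact hv
      have := Matrix.ker_mulVecLin_transpose_mul_self (Dᵀ * Bᵀ)
      have hmem : v ∈ LinearMap.ker ((Dᵀ * Bᵀ)ᵀ * (Dᵀ * Bᵀ)).mulVecLin := h1
      rw [this] at hmem
      exact hmem
    have hBv : Bᵀ *ᵥ v = 0 := by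
      have h1 : Dᵀ *ᵥ (Bᵀ *ᵥ v) = 0 := by rw [Matrix.mulVec_mulVec]; exact hker
      have hDT : IsUnit Dᵀ.det := by rw [Matrix.det_transpose]; exact hD.isUnit
      have h2 : (Dᵀ⁻¹ * Dᵀ) *ᵥ (Bᵀ *ᵥ v) = 0 := by
        rw [← Matrix.mulVec_mulVec, h1, Matrix.mulVec_zero]
      rwa [Matrix.nonsing_inv_mul Dᵀ hDT, Matrix.one_mulVec] at h2
    have hsum : ∑ i, v i • (WithLp.toLp 2 (B i) : EuclideanSpace ℝ (Fin l)) = 0 := by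
      ext j
      have h2 := congrFun hBv j
      simp only [Matrix.mulVec, dotProduct, Matrix.transpose_apply, Pi.zero_apply] at h2
      simpa [Finset.sum_apply, mul_comm] using h2
    have hall := Fintype.linearIndependent_iff.mp hBli v hsum
    exact hv0 (funext hall)
  -- determinant of Alin
  have hdetA : LinearMap.det Alin = Amat.det := by
    rw [hAmatdef, LinearMap.det_toMatrix]
  have hkey : |Amat.det| = |D.det| * Real.sqrt ((B * Bᵀ).det / (B * D * Dᵀ * Bᵀ).det) :=
    key_det hdk D P Q Amat B hPtP hQtQ hBQ hcompmat hBDP hden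
  -- final assembly
  calc μH[((d : ℕ) : ℝ)] (Dlin '' M)
      = μH[((d : ℕ) : ℝ)] (Lψ '' (Alin '' M')) := by rw [hDim]
    _ = ENNReal.ofReal |LinearMap.det Alin| * μH[((d : ℕ) : ℝ)] M' := by rw [hμ1, hμ2]
    _ = ENNReal.ofReal (|D.det| * Real.sqrt ((B * Bᵀ).det / (B * D * Dᵀ * Bᵀ).det))
        * μH[((d : ℕ) : ℝ)] M := by
        rw [hμ3, hdetA, hkey]
end
end

section
/- For u, v ∈ ℝ^n, let C^n(y) = {x ∈ ℝ^n : ‖x − y‖_∞ < 1}, D(u,v) = conv(C^n(u) ∪ C^n(v)), and E = conv(C^n(u−v) ∪ C^n(v−u)). Then E = (D(u,v) − v) ∪ (−D(u,v) + v), where D(u,v) − v = {x − v : x ∈ D(u,v)} and −D(u,v) + v = {v − x : x ∈ D(u,v)}. -/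
noncomputable section

/-- `C^n(y) = {x ∈ ℝ^n : ‖x - y‖_∞ < 1}`, the open cube of edge length 2 centered at `y`. -/
def openCube {n : ℕ} (y : Fin n → ℝ) : Set (Fin n → ℝ) :=
  {x | ∀ i, |x i - y i| < 1}

/-- `D(u,v) = conv(C^n(u) ∪ C^n(v))`. -/
def cubesHull {n : ℕ} (u v : Fin n → ℝ) : Set (Fin n → ℝ) :=
  convexHull ℝ (openCube u ∪ openCube v)

lemma mem_openCube_self {n : ℕ} (y : Fin n → ℝ) : y ∈ openCube y :=
  fun i => by simp

lemma conv_aux {s t p q : ℝ} (hs : 0 ≤ s) (ht : 0 ≤ t) (hst : s + t = 1)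
    (hp : |p| < 1) (hq : |q| < 1) : |s * p + t * q| < 1 := by
  rw [abs_lt] at hp hq ⊢
  obtain ⟨hp1, hp2⟩ := hp
  obtain ⟨hq1, hq2⟩ := hq
  rcases hs.eq_or_lt with hs0 | hs0
  · have ht1 : t = 1 := by linarith
    rw [← hs0, ht1]
    constructor <;> · simp; linarith
  · have h1 : s * p < s * 1 := (mul_lt_mul_iff_right₀ hs0).2 hp2
    have h2 : s * (-1) < s * p := (mul_lt_mul_iff_right₀ hs0).2 hp1
    have h3 : t * q ≤ t * 1 := mul_le_mul_of_nonneg_left (le_of_lt hq2) ht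
    have h4 : t * (-1) ≤ t * q := mul_le_mul_of_nonneg_left (le_of_lt hq1) ht
    constructor <;> nlinarith

lemma openCube_convex {n : ℕ} (y : Fin n → ℝ) : Convex ℝ (openCube y) := by
  intro a ha b hb s t hs ht hst i
  have he : (s • a + t • b) i - y i = s * (a i - y i) + t * (b i - y i) := by
    simp only [Pi.add_apply, Pi.smul_apply, smul_eq_mul]
    linear_combination (y i) * hst
  rw [he]
  exact conv_aux hs ht hst (ha i) (hb i)

lemma mem_cubesHull {n : ℕ} {u w x : Fin n → ℝ} :
    x ∈ cubesHull u w ↔ ∃ a ∈ openCube u, ∃ b ∈ openCube w, x ∈ segment ℝ a b := by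
  rw [cubesHull, (openCube_convex u).convexHull_union (openCube_convex w)
      ⟨u, mem_openCube_self u⟩ ⟨w, mem_openCube_self w⟩, mem_convexJoin]

lemma zeroCube_subset {n : ℕ} (u v : Fin n → ℝ) :
    openCube 0 ⊆ cubesHull (u - v) (v - u) := by
  intro c hc
  have h1 : c + (u - v) ∈ openCube (u - v) := fun i => by
    have := hc i
    have he : (c + (u - v)) i - (u - v) i = c i - (0 : Fin n → ℝ) i := by
      simp only [Pi.add_apply, Pi.sub_apply, Pi.zero_apply]; ring
    rw [he]; exact this
  have h2 : c - (u - v) ∈ openCube (v - u) := fun i => by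
    have := hc i
    have he : (c - (u - v)) i - (v - u) i = c i - (0 : Fin n → ℝ) i := by
      simp only [Pi.sub_apply, Pi.zero_apply]; ring
    rw [he]; exact this
  have hmem : c ∈ segment ℝ (c + (u - v)) (c - (u - v)) := by
    refine ⟨1/2, 1/2, by norm_num, by norm_num, by norm_num, ?_⟩
    module
  exact (convex_convexHull ℝ (openCube (u - v) ∪ openCube (v - u))).segment_subset
    (subset_convexHull ℝ (openCube (u - v) ∪ openCube (v - u)) (Or.inl h1))
    (subset_convexHull ℝ (openCube (u - v) ∪ openCube (v - u)) (Or.inr h2)) hmem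

/-- The set `E = conv(C^n(u-v) ∪ C^n(v-u))` satisfies
`E = (D(u,v) - v) ∪ (-D(u,v) + v)`. -/
theorem E_eq_union_of_translates
    {n : ℕ} (u v : Fin n → ℝ) :
    cubesHull (u - v) (v - u)
      = (fun x => x - v) '' cubesHull u v ∪ (fun x => v - x) '' cubesHull u v := by
  have hconvUV : Convex ℝ (convexHull ℝ (openCube u ∪ openCube v)) :=
    convex_convexHull ℝ _
  have hsubUV : openCube u ∪ openCube v ⊆ convexHull ℝ (openCube u ∪ openCube v) :=
    subset_convexHull ℝ _
  have hconvE : Convex ℝ (convexHull ℝ (openCube (u - v) ∪ openCube (v - u))) :=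
    convex_convexHull ℝ _
  have hsubE : openCube (u - v) ∪ openCube (v - u)
      ⊆ convexHull ℝ (openCube (u - v) ∪ openCube (v - u)) :=
    subset_convexHull ℝ _
  ext x
  constructor
  · intro hx
    obtain ⟨a, ha, b, hb, s, t, hs, ht, hst, rfl⟩ := mem_cubesHull.mp hx
    have hm : ∀ i, |((1/2 : ℝ) • (a + b)) i| < 1 := fun i => by
      have h1 := ha i
      have h2 := hb i
      simp only [Pi.sub_apply] at h1 h2
      simp only [Pi.smul_apply, Pi.add_apply, smul_eq_mul]
      rw [abs_lt] at h1 h2 ⊢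
      obtain ⟨h1a, h1b⟩ := h1
      obtain ⟨h2a, h2b⟩ := h2
      constructor <;> linarith
    set m : Fin n → ℝ := (1/2 : ℝ) • (a + b) with hmdef
    rcases le_total s t with hts | hts
    · -- t ≥ 1/2 : x lies in  v - D(u,v)
      refine Or.inr ⟨v - (s • a + t • b), ?_, by simp⟩
      have h1 : v - b ∈ openCube u := fun i => by
        have := hb i
        have he : (v - b) i - u i = -(b i - (v - u) i) := by
          simp only [Pi.sub_apply]; ring
        rw [he, abs_neg]; exact this
      have h2 : v - m ∈ openCube v := fun i => by
        have := hm i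
        have he : (v - m) i - v i = -(m i) := by
          simp only [Pi.sub_apply]; ring
        rw [he, abs_neg]; exact this
      have hcomb : (2*t - 1) • (v - b) + (2*s) • (v - m)
          ∈ convexHull ℝ (openCube u ∪ openCube v) :=
        hconvUV (hsubUV (Or.inl h1)) (hsubUV (Or.inr h2))
          (by linarith) (by linarith) (by linarith)
      have he : (2*t - 1) • (v - b) + (2*s) • (v - m) = v - (s • a + t • b) := by
        funext i
        simp only [hmdef, Pi.add_apply, Pi.sub_apply, Pi.smul_apply, smul_eq_mul]
        linear_combination (2 * v i - b i) * hst
      rw [he] at hcomb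
      exact hcomb
    · -- s ≥ 1/2 : x lies in  D(u,v) - v
      refine Or.inl ⟨(s • a + t • b) + v, ?_, by simp⟩
      have h1 : a + v ∈ openCube u := fun i => by
        have := ha i
        have he : (a + v) i - u i = a i - (u - v) i := by
          simp only [Pi.add_apply, Pi.sub_apply]; ring
        rw [he]; exact this
      have h2 : m + v ∈ openCube v := fun i => by
        have := hm i
        have he : (m + v) i - v i = m i := by
          simp only [Pi.add_apply]; ring
        rw [he]; exact this
      have hcomb : (2*s - 1) • (a + v) + (2*t) • (m + v)
          ∈ convexHull ℝ (openCube u ∪ openCube v) :=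
        hconvUV (hsubUV (Or.inl h1)) (hsubUV (Or.inr h2))
          (by linarith) (by linarith) (by linarith)
      have he : (2*s - 1) • (a + v) + (2*t) • (m + v) = (s • a + t • b) + v := by
        funext i
        simp only [hmdef, Pi.add_apply, Pi.smul_apply, smul_eq_mul]
        linear_combination (a i + 2 * v i) * hst
      rw [he] at hcomb
      exact hcomb
  · rintro (⟨y, hy, rfl⟩ | ⟨y, hy, rfl⟩)
    · obtain ⟨a, ha, b, hb, s, t, hs, ht, hst, rfl⟩ := mem_cubesHull.mp hy
      have h1 : a - v ∈ openCube (u - v) := fun i => by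
        have := ha i
        have he : (a - v) i - (u - v) i = a i - u i := by
          simp only [Pi.sub_apply]; ring
        rw [he]; exact this
      have h2 : b - v ∈ openCube 0 := fun i => by
        have := hb i
        have he : (b - v) i - (0 : Fin n → ℝ) i = b i - v i := by
          simp only [Pi.sub_apply, Pi.zero_apply]; ring
        rw [he]; exact this
      have hcomb : s • (a - v) + t • (b - v)
          ∈ convexHull ℝ (openCube (u - v) ∪ openCube (v - u)) :=
        hconvE (hsubE (Or.inl h1)) (zeroCube_subset u v h2) hs ht hst
      have he : s • (a - v) + t • (b - v) = (s • a + t • b) - v := by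
        funext i
        simp only [Pi.add_apply, Pi.sub_apply, Pi.smul_apply, smul_eq_mul]
        linear_combination (-(v i)) * hst
      rw [he] at hcomb
      exact hcomb
    · obtain ⟨a, ha, b, hb, s, t, hs, ht, hst, rfl⟩ := mem_cubesHull.mp hy
      have h1 : v - a ∈ openCube (v - u) := fun i => by
        have := ha i
        have he : (v - a) i - (v - u) i = -(a i - u i) := by
          simp only [Pi.sub_apply]; ring
        rw [he, abs_neg]; exact this
      have h2 : v - b ∈ openCube 0 := fun i => by
        have := hb i
        have he : (v - b) i - (0 : Fin n → ℝ) i = -(b i - v i) := by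
          simp only [Pi.sub_apply, Pi.zero_apply]; ring
        rw [he, abs_neg]; exact this
      have hcomb : s • (v - a) + t • (v - b)
          ∈ convexHull ℝ (openCube (u - v) ∪ openCube (v - u)) :=
        hconvE (hsubE (Or.inr h1)) (zeroCube_subset u v h2) hs ht hst
      have he : s • (v - a) + t • (v - b) = v - (s • a + t • b) := by
        funext i
        simp only [Pi.add_apply, Pi.sub_apply, Pi.smul_apply, smul_eq_mul]
        linear_combination (v i) * hst
      rw [he] at hcomb
      exact hcomb
end
end
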